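/- Let p ≥ 2 and let f : ℝ^d → ℝ be convex, differentiable, L-smooth w.r.t. ‖·‖_p, and μ-strongly convex w.r.t. ‖·‖_2, with minimizer x*. Let (x_t) be HASD iterates started at x_0 ∈ ℝ^d, run for T iterations, and set 𝒢 = (1/T) ∑_{t=0}^{T-1} ‖∇f(x_{t+1})‖_{p*} / ‖∇f(x_{t+1})‖_2. If 𝒢 ≥ Ĝ ≥ 1 and T ≥ (36/Ĝ)√(L/μ), then f(x_T) − f(x*) ≤ (f(x_0) − f(x*))/2. -/

import Mathlib

open scoped BigOperators
open scoped InnerProductSpace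

/-- The `ℓ_p` "norm" on `ℝ^d` for a real exponent `p`. -/
noncomputable def pnorm (p : ℝ) {d : ℕ} (x : EuclideanSpace ℝ (Fin d)) : ℝ :=
  (∑ i, |x i| ^ p) ^ (1 / p)

/-- The dual exponent `p* = p/(p-1)`, so that `1/p + 1/p* = 1`. -/
noncomputable def dualExp (p : ℝ) : ℝ := p / (p - 1)

/-- The iterates of the Hyper-Accelerated Steepest Descent (HASD) method for
`f : ℝ^d → ℝ` differentiable, smoothness constant `L > 0`, started at `x0`. -/
structure HASD (d : ℕ) (p L : ℝ) (f : EuclideanSpace ℝ (Fin d) → ℝ)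
    (x0 : EuclideanSpace ℝ (Fin d)) where
  x : ℕ → EuclideanSpace ℝ (Fin d)
  y : ℕ → EuclideanSpace ℝ (Fin d)
  v : ℕ → EuclideanSpace ℝ (Fin d)
  a : ℕ → ℝ
  A : ℕ → ℝ
  ρ : ℕ → ℝ
  ψ : ℕ → EuclideanSpace ℝ (Fin d) → ℝ
  x_zero : x 0 = x0
  A_zero : A 0 = 0
  ψ_zero : ∀ z, ψ 0 z = (1 / 2) * pnorm 2 (z - x0) ^ 2
  /-- `v t` minimizes `ψ t` over `ℝ^d`. -/
  v_min : ∀ t z, ψ t (v t) ≤ ψ t z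
  grad_ne : ∀ t : ℕ, gradient f (x (t + 1)) ≠ 0
  ρ_pos : ∀ t : ℕ, 0 < ρ t
  ρ_lb : ∀ t : ℕ, (1 / 2) * (pnorm 2 (gradient f (x (t + 1))) ^ 2 /
      pnorm (dualExp p) (gradient f (x (t + 1))) ^ 2) ≤ ρ t
  ρ_ub : ∀ t : ℕ, ρ t ≤ 2 * (pnorm 2 (gradient f (x (t + 1))) ^ 2 /
      pnorm (dualExp p) (gradient f (x (t + 1))) ^ 2)
  a_pos : ∀ t : ℕ, 0 < a (t + 1)
  a_eq : ∀ t : ℕ, a (t + 1) ^ 2 = (A t + a (t + 1)) / (18 * L * ρ t)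
  A_succ : ∀ t : ℕ, A (t + 1) = A t + a (t + 1)
  y_def : ∀ t : ℕ, y t = (1 - a (t + 1) / A (t + 1)) • x t + (a (t + 1) / A (t + 1)) • v t
  /-- `x (t+1)` minimizes `z ↦ ⟪∇f(y t), z - y t⟫ + L ‖z - y t‖_p²` over `ℝ^d`. -/
  x_min : ∀ (t : ℕ) (z : EuclideanSpace ℝ (Fin d)),
      ⟪gradient f (y t), x (t + 1) - y t⟫_ℝ + L * pnorm p (x (t + 1) - y t) ^ 2 ≤
      ⟪gradient f (y t), z - y t⟫_ℝ + L * pnorm p (z - y t) ^ 2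
  ψ_succ : ∀ (t : ℕ) (z : EuclideanSpace ℝ (Fin d)),
      ψ (t + 1) z = ψ t z + a (t + 1) * (f (x (t + 1)) + ⟪gradient f (x (t + 1)), z - x (t + 1)⟫_ℝ)

variable {d : ℕ}

lemma pnorm_nonneg (p : ℝ) (x : EuclideanSpace ℝ (Fin d)) : 0 ≤ pnorm p x := by
  apply Real.rpow_nonneg
  exact Finset.sum_nonneg fun i _ => Real.rpow_nonneg (abs_nonneg _) _

lemma pnorm_zero {p : ℝ} (hp : 0 < p) : pnorm p (0 : EuclideanSpace ℝ (Fin d)) = 0 := by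
  unfold pnorm
  have : ∀ i : Fin d, |(0 : EuclideanSpace ℝ (Fin d)) i| ^ p = 0 := by
    intro i
    simp [Real.zero_rpow hp.ne']
  rw [Finset.sum_congr rfl fun i _ => this i]
  rw [Finset.sum_const, smul_zero, Real.zero_rpow (by positivity : (1/p) ≠ 0)]

lemma pnorm_pos {p : ℝ} (hp : 0 < p) {x : EuclideanSpace ℝ (Fin d)} (hx : x ≠ 0) :
    0 < pnorm p x := by
  rcases (pnorm_nonneg p x).lt_or_eq with h | h
  · exact h
  unfold pnorm at h
  exfalso
  apply hx
  have hsum : (∑ i, |x i| ^ p) = 0 := by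
    by_contra hne
    have h0 : 0 ≤ ∑ i, |x i| ^ p := Finset.sum_nonneg fun i _ => Real.rpow_nonneg (abs_nonneg _) _
    have := Real.rpow_pos_of_pos (lt_of_le_of_ne h0 (Ne.symm hne)) (1/p)
    rw [← h] at this; exact lt_irrefl _ this
  have := (Finset.sum_eq_zero_iff_of_nonneg (fun i _ => Real.rpow_nonneg (abs_nonneg _) p)).1 hsum
  ext i
  have hi := this i (Finset.mem_univ i)
  have : |x i| = 0 := by
    by_contra hne
    have := Real.rpow_pos_of_pos (lt_of_le_of_ne (abs_nonneg _) (Ne.symm hne)) p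
    rw [hi] at this; exact lt_irrefl _ this
  simpa using abs_eq_zero.1 this

lemma pnorm_two_eq_norm (x : EuclideanSpace ℝ (Fin d)) : pnorm 2 x = ‖x‖ := by
  rw [EuclideanSpace.norm_eq, pnorm]
  rw [Real.sqrt_eq_rpow]
  congr 1
  apply Finset.sum_congr rfl
  intro i _
  rw [show ((2:ℝ)) = ((2:ℕ):ℝ) by norm_num, Real.rpow_natCast]
  rw [sq_abs, Real.norm_eq_abs, sq_abs]

lemma inner_eq_sum (x y : EuclideanSpace ℝ (Fin d)) : ⟪x, y⟫_ℝ = ∑ i, x i * y i := by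
  simp [PiLp.inner_apply, RCLike.inner_apply, conj_trivial]
  exact Finset.sum_congr rfl fun _ _ => mul_comm _ _

lemma pnorm_smul {p : ℝ} (hp : 0 < p) (s : ℝ) (x : EuclideanSpace ℝ (Fin d)) :
    pnorm p (s • x) = |s| * pnorm p x := by
  unfold pnorm
  have h1 : ∀ i : Fin d, |(s • x) i| ^ p = |s| ^ p * |x i| ^ p := by
    intro i
    have : (s • x) i = s * x i := rfl
    rw [this, abs_mul, Real.mul_rpow (abs_nonneg _) (abs_nonneg _)]
  rw [Finset.sum_congr rfl fun i _ => h1 i, ← Finset.mul_sum,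
    Real.mul_rpow (Real.rpow_nonneg (abs_nonneg _) _)
      (Finset.sum_nonneg fun i _ => Real.rpow_nonneg (abs_nonneg _) _),
    ← Real.rpow_mul (abs_nonneg s)]
  rw [mul_one_div, div_self hp.ne', Real.rpow_one]

lemma pnorm_add_le {p : ℝ} (hp : 1 ≤ p) (x y : EuclideanSpace ℝ (Fin d)) :
    pnorm p (x + y) ≤ pnorm p x + pnorm p y := by
  have := Real.Lp_add_le (Finset.univ) (fun i => x i) (fun i => y i) hp
  unfold pnorm
  have hxy : ∀ i : Fin d, (x + y) i = x i + y i := fun i => rfl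
  rw [Finset.sum_congr rfl fun i _ => by rw [hxy i]]
  exact this

lemma inner_le_pnorm {p q : ℝ} (hpq : Real.HolderConjugate p q)
    (x y : EuclideanSpace ℝ (Fin d)) : ⟪x, y⟫_ℝ ≤ pnorm p x * pnorm q y := by
  rw [inner_eq_sum]
  exact Real.inner_le_Lp_mul_Lq Finset.univ (fun i => x i) (fun i => y i) hpq

lemma neg_pnorm_le_inner {p q : ℝ} (hpq : Real.HolderConjugate p q)
    (x y : EuclideanSpace ℝ (Fin d)) : -(pnorm p x * pnorm q y) ≤ ⟪x, y⟫_ℝ := by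
  have := inner_le_pnorm hpq (-x) y
  rw [inner_neg_left] at this
  have hn : pnorm p (-x) = pnorm p x := by
    have : (-x : EuclideanSpace ℝ (Fin d)) = (-1 : ℝ) • x := by ext i; simp
    rw [this, pnorm_smul hpq.pos]; norm_num
  rw [hn] at this
  linarith


lemma dualExp_conj {p : ℝ} (hp : 2 ≤ p) : Real.HolderConjugate (dualExp p) p :=
  ((Real.holderConjugate_iff_eq_conjExponent (by linarith : (1:ℝ) < p)).2 rfl).symm

lemma dualExp_pos {p : ℝ} (hp : 2 ≤ p) : 0 < dualExp p := (dualExp_conj hp).pos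

lemma exists_norming {p : ℝ} (hp : 2 ≤ p) (g : EuclideanSpace ℝ (Fin d)) :
    ∃ u : EuclideanSpace ℝ (Fin d), pnorm p u ≤ 1 ∧ ⟪g, u⟫_ℝ = -(pnorm (dualExp p) g) := by
  have hp1 : (1:ℝ) < p := by linarith
  have hq := dualExp_conj hp
  set q := dualExp p with hqdef
  have hq1 : 1 < q := hq.lt
  by_cases hg : g = 0
  · refine ⟨0, ?_, ?_⟩
    · rw [pnorm_zero (by linarith : (0:ℝ) < p)]; norm_num
    · rw [hg, pnorm_zero (by linarith : (0:ℝ) < q)]; rw [inner_zero_left]; norm_num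
  have hS : 0 < ∑ i, |g i| ^ q := by
    have := pnorm_pos (by linarith : (0:ℝ) < q) hg
    unfold pnorm at this
    by_contra hc
    push_neg at hc
    have h0 : (∑ i, |g i| ^ q) = 0 :=
      le_antisymm hc (Finset.sum_nonneg fun i _ => Real.rpow_nonneg (abs_nonneg _) _)
    rw [h0, Real.zero_rpow (by positivity : (1:ℝ)/q ≠ 0)] at this
    exact lt_irrefl _ this
  set S : ℝ := ∑ i, |g i| ^ q with hSdef
  have hN : pnorm q g = S ^ (1/q) := rfl
  have hNpos : 0 < pnorm q g := pnorm_pos (by linarith) hg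
  set N := pnorm q g with hNdef
  have hNq : N ^ q = S := by
    rw [hN, ← Real.rpow_mul hS.le, one_div_mul_cancel (by linarith : q ≠ 0), Real.rpow_one]
  -- auxiliary: |g i| * |g i| ^ (q-2) = |g i| ^ (q-1)
  have haux : ∀ i : Fin d, |g i| * |g i| ^ (q - 2) = |g i| ^ (q - 1) := by
    intro i
    rcases eq_or_ne (g i) 0 with h | h
    · rw [h]; simp [Real.zero_rpow (by linarith : q - 1 ≠ 0)]
    · have hpos : 0 < |g i| := abs_pos.2 h
      rw [show |g i| * |g i| ^ (q-2) = |g i| ^ (1:ℝ) * |g i| ^ (q-2) by rw [Real.rpow_one],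
        ← Real.rpow_add hpos]
      congr 1; ring
  have hqp : (q - 1) * p = q := by
    have hne : p - 1 ≠ 0 := by linarith
    rw [hqdef]; unfold dualExp
    field_simp
    ring
  have habs2 : ∀ i : Fin d, |g i| ^ (2:ℝ) * |g i| ^ (q - 2) = |g i| ^ q := by
    intro i
    rcases eq_or_ne (g i) 0 with h | h
    · rw [h]; simp [Real.zero_rpow (by norm_num : (2:ℝ) ≠ 0),
        Real.zero_rpow (by linarith : q ≠ 0)]
    · rw [← Real.rpow_add (abs_pos.2 h)]; congr 1; ring
  have hNq1 : 0 < N ^ (q - 1) := Real.rpow_pos_of_pos hNpos _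
  refine ⟨WithLp.toLp 2 (fun i => -(g i * |g i| ^ (q - 2)) / N ^ (q - 1)), ?_, ?_⟩
  · -- pnorm p u ≤ 1
    have hup : ∀ i : Fin d, |(-(g i * |g i| ^ (q - 2)) / N ^ (q - 1) : ℝ)| ^ p
        = |g i| ^ q / S := by
      intro i
      rw [abs_div, abs_neg, abs_mul, abs_of_nonneg (Real.rpow_nonneg (abs_nonneg _) _),
        abs_of_pos hNq1, haux i, Real.div_rpow (Real.rpow_nonneg (abs_nonneg _) _) hNq1.le,
        ← Real.rpow_mul (abs_nonneg _), ← Real.rpow_mul hNpos.le, hqp, hNq]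
    have : pnorm p (WithLp.toLp 2 (fun i => -(g i * |g i| ^ (q - 2)) / N ^ (q - 1)) : EuclideanSpace ℝ (Fin d)) = 1 := by
      unfold pnorm
      rw [Finset.sum_congr rfl fun i _ => hup i, ← Finset.sum_div, ← hSdef, div_self hS.ne',
        Real.one_rpow]
    rw [this]
  · -- inner product
    rw [inner_eq_sum]
    have hterm : ∀ i : Fin d, g i * (-(g i * |g i| ^ (q - 2)) / N ^ (q - 1))
        = -(|g i| ^ q / N ^ (q - 1)) := by
      intro i
      have : g i * -(g i * |g i| ^ (q - 2)) = -(|g i| ^ (2:ℝ) * |g i| ^ (q - 2)) := by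
        have h2 : g i * g i = |g i| ^ (2:ℝ) := by
          rw [show ((2:ℝ)) = ((2:ℕ):ℝ) by norm_num, Real.rpow_natCast, sq_abs]; ring
        rw [← h2]; ring
      rw [mul_div_assoc'] at *
      rw [this, habs2 i, neg_div]
    rw [Finset.sum_congr rfl fun i _ => hterm i, Finset.sum_neg_distrib, ← Finset.sum_div,
      ← hSdef, ← hNq, ← Real.rpow_sub hNpos]
    norm_num

variable {p L : ℝ} {f : EuclideanSpace ℝ (Fin d) → ℝ} {x0 : EuclideanSpace ℝ (Fin d)}

lemma pnorm_neg {q : ℝ} (hq : 0 < q) (x : EuclideanSpace ℝ (Fin d)) :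
    pnorm q (-x) = pnorm q x := by
  have : (-x : EuclideanSpace ℝ (Fin d)) = (-1 : ℝ) • x := by ext i; simp
  rw [this, pnorm_smul hq]; norm_num

set_option maxHeartbeats 1000000 in
/-- Key per-step progress lemma. -/
lemma keystep (hp : 2 ≤ p) (hL : 0 < L)
    (hsmooth : ∀ x y : EuclideanSpace ℝ (Fin d),
      pnorm (dualExp p) (gradient f y - gradient f x) ≤ L * pnorm p (y - x))
    (h : HASD d p L f x0) (t : ℕ) :
    pnorm (dualExp p) (gradient f (h.x (t + 1))) ^ 2 / (16 * L) ≤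
      ⟪gradient f (h.x (t + 1)), h.y t - h.x (t + 1)⟫_ℝ := by
  have hq := dualExp_conj hp
  set q := dualExp p with hqdef
  set Y := h.y t with hY
  set X := h.x (t+1) with hX
  set gy := gradient f Y with hgy
  set g := gradient f X with hg
  set r := pnorm p (X - Y) with hr
  set N := pnorm q gy with hN
  set M := pnorm q g with hM
  have hr0 : 0 ≤ r := pnorm_nonneg _ _
  have hN0 : 0 ≤ N := pnorm_nonneg _ _
  have hM0 : 0 ≤ M := pnorm_nonneg _ _
  -- Step 1 : key inequality
  have key : ⟪gy, X - Y⟫_ℝ + L * r ^ 2 ≤ -(N ^ 2 / (4 * L)) := by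
    obtain ⟨u, hu1, hu2⟩ := exists_norming hp gy
    set s : ℝ := N / (2 * L) with hs
    have hs0 : 0 ≤ s := by positivity
    have := h.x_min t (Y + s • u)
    have hz : (Y + s • u) - Y = s • u := by abel
    rw [hz] at this
    have hinner : ⟪gy, s • u⟫_ℝ = s * (-N) := by rw [real_inner_smul_right, hu2]
    have hpn : pnorm p (s • u) ≤ s := by
      rw [pnorm_smul (by linarith : (0:ℝ) < p), abs_of_nonneg hs0]
      nlinarith [pnorm_nonneg p u]
    have hpn2 : L * pnorm p (s • u) ^ 2 ≤ L * s ^ 2 := by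
      have h0 := pnorm_nonneg p (s • u)
      have hsq : pnorm p (s • u) ^ 2 ≤ s ^ 2 := by nlinarith
      exact mul_le_mul_of_nonneg_left hsq hL.le
    have hfinal : ⟪gy, s • u⟫_ℝ + L * pnorm p (s • u) ^ 2 ≤ -(N ^ 2 / (4 * L)) := by
      rw [hinner]
      have : s * (-N) + L * s ^ 2 = -(N ^ 2 / (4 * L)) := by
        rw [hs]; field_simp; ring
      linarith
    linarith [this, hfinal]
  -- Step 2 : Hölder implies L r ≤ N
  have holder : -(N * r) ≤ ⟪gy, X - Y⟫_ℝ := by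
    have := neg_pnorm_le_inner hq gy (X - Y)
    rw [← hN, ← hr] at this
    exact this
  have hLr2 : L * r ^ 2 ≤ N * r := by
    have hpos : 0 ≤ N ^ 2 / (4 * L) := by positivity
    linarith
  have hLrN : L * r ≤ N := by
    rcases hr0.lt_or_eq with hrpos | hrz
    · have h' : (L * r) * r ≤ N * r := by nlinarith
      exact le_of_mul_le_mul_right h' hrpos
    · rw [← hrz]; simpa using hN0
  -- Step 3 : smoothness
  have hsm : pnorm q (g - gy) ≤ L * r := by
    have := hsmooth Y X
    rw [← hgy, ← hg, ← hr] at this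
    exact this
  -- Step 4 : M ≤ 2 N
  have hM2N : M ≤ 2 * N := by
    have htri : pnorm q (gy + (g - gy)) ≤ pnorm q gy + pnorm q (g - gy) :=
      pnorm_add_le hq.lt.le _ _
    have : gy + (g - gy) = g := by abel
    rw [this] at htri
    calc M ≤ N + pnorm q (g - gy) := htri
    _ ≤ N + L * r := by linarith
    _ ≤ 2 * N := by linarith
  -- Step 5
  have h5 : N ^ 2 / (4 * L) ≤ ⟪g, Y - X⟫_ℝ := by
    have e1 : ⟪gy, Y - X⟫_ℝ = -⟪gy, X - Y⟫_ℝ := by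
      rw [show Y - X = -(X - Y) by abel, inner_neg_right]
    have e2 : -(pnorm q (g - gy) * pnorm p (Y - X)) ≤ ⟪g - gy, Y - X⟫_ℝ :=
      neg_pnorm_le_inner hq _ _
    have e3 : pnorm p (Y - X) = r := by
      rw [show Y - X = -(X - Y) by abel, pnorm_neg (by linarith : (0:ℝ) < p), hr]
    have e4 : ⟪g, Y - X⟫_ℝ = ⟪gy, Y - X⟫_ℝ + ⟪g - gy, Y - X⟫_ℝ := by
      rw [← inner_add_left]; norm_num
    rw [e3] at e2
    have hrineq : -(pnorm q (g - gy) * r) ≥ -(L * r * r) := by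
      have := mul_le_mul_of_nonneg_right hsm hr0
      linarith
    rw [e4, e1]
    have hrr : L * r * r = L * r ^ 2 := by ring
    linarith
  calc M ^ 2 / (16 * L) ≤ N ^ 2 / (4 * L) := by
        rw [div_le_div_iff₀ (by positivity) (by positivity)]
        nlinarith [mul_self_le_mul_self hM0 hM2N, hL.le]
    _ ≤ ⟪g, Y - X⟫_ℝ := h5

lemma inner_expand (a b : ℝ) (x y : EuclideanSpace ℝ (Fin d)) :
    ‖a • x + b • y‖ ^ 2 = a ^ 2 * ‖x‖ ^ 2 + 2 * a * b * ⟪x, y⟫_ℝ + b ^ 2 * ‖y‖ ^ 2 := by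
  rw [← real_inner_self_eq_norm_sq, ← real_inner_self_eq_norm_sq, ← real_inner_self_eq_norm_sq]
  rw [inner_add_add_self]
  simp only [real_inner_smul_left, real_inner_smul_right]
  rw [real_inner_comm y x]
  ring

lemma psi_quad (h : HASD d p L f x0) (t : ℕ) (z w : EuclideanSpace ℝ (Fin d)) (s : ℝ) :
    h.ψ t ((1 - s) • w + s • z) =
      (1 - s) * h.ψ t w + s * h.ψ t z - (s * (1 - s) / 2) * ‖z - w‖ ^ 2 := by
  induction t with
  | zero =>
    rw [h.ψ_zero, h.ψ_zero, h.ψ_zero]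
    rw [pnorm_two_eq_norm, pnorm_two_eq_norm, pnorm_two_eq_norm]
    have hv : (1 - s) • w + s • z - x0 = (1 - s) • (w - x0) + s • (z - x0) := by
      match_scalars <;> ring
    have hzw : z - w = (1 : ℝ) • (z - x0) + (-1 : ℝ) • (w - x0) := by
      match_scalars <;> ring
    rw [hv, hzw, inner_expand, inner_expand]
    have h1 : ‖w - x0‖ ^ 2 = (1:ℝ) ^ 2 * ‖w - x0‖^2 := by ring
    have h2 : ‖z - x0‖ ^ 2 = (1:ℝ) ^ 2 * ‖z - x0‖^2 := by ring
    rw [real_inner_comm (z - x0) (w - x0)]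
    ring
  | succ n ih =>
    rw [h.ψ_succ, h.ψ_succ, h.ψ_succ, ih]
    have hlin : ((1 - s) • w + s • z) - h.x (n + 1) =
        (1 - s) • (w - h.x (n + 1)) + s • (z - h.x (n + 1)) := by
      match_scalars <;> ring
    rw [hlin, inner_add_right, real_inner_smul_right, real_inner_smul_right]
    ring

lemma psi_strongmin (h : HASD d p L f x0) (t : ℕ) (z : EuclideanSpace ℝ (Fin d)) :
    h.ψ t (h.v t) + ‖z - h.v t‖ ^ 2 / 2 ≤ h.ψ t z := by
  set C : ℝ := ‖z - h.v t‖ ^ 2 / 2 with hC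
  have hC0 : 0 ≤ C := by positivity
  set D : ℝ := h.ψ t z - h.ψ t (h.v t) with hD
  have hD0 : 0 ≤ D := by have := h.v_min t z; simp [hD]; linarith
  have hs : ∀ s : ℝ, 0 < s → s ≤ 1 → (1 - s) * C ≤ D := by
    intro s hs0 hs1
    have hq := psi_quad h t z (h.v t) s
    have hmin := h.v_min t ((1 - s) • h.v t + s • z)
    rw [hq] at hmin
    have : s * ((1 - s) * C) ≤ s * D := by
      have hexp : s * (1 - s) / 2 * ‖z - h.v t‖ ^ 2 = s * ((1-s) * C) := by rw [hC]; ring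
      nlinarith [hmin]
    exact le_of_mul_le_mul_left this hs0
  rcases hC0.lt_or_eq with hCpos | hCz
  · by_contra hcon
    push_neg at hcon
    have hDC : D < C := by simp only [hD]; linarith
    have hnum : 0 < C - D := by linarith
    have hsval := hs ((C - D) / (2 * C)) (by positivity) (by
      rw [div_le_one (by positivity)]; linarith)
    have : (1 - (C - D) / (2 * C)) * C = (C + D) / 2 := by field_simp; ring
    rw [this] at hsval
    linarith
  · have : h.ψ t (h.v t) ≤ h.ψ t z := h.v_min t z
    simp only [hC] at hCz
    linarith [hCz]

lemma A_nonneg (h : HASD d p L f x0) (t : ℕ) : 0 ≤ h.A t := by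
  induction t with
  | zero => rw [h.A_zero]
  | succ n ih => rw [h.A_succ]; linarith [h.a_pos n]

lemma A_pos (h : HASD d p L f x0) (t : ℕ) : 0 < h.A (t + 1) := by
  rw [h.A_succ]; linarith [h.a_pos t, A_nonneg h t]

/-- Lower bound on the estimate sequence at any point, via convexity. -/
lemma psi_le (hμ' : ∀ x y : EuclideanSpace ℝ (Fin d),
      0 ≤ f y - f x - ⟪gradient f x, y - x⟫_ℝ)
    (h : HASD d p L f x0) (t : ℕ) (z : EuclideanSpace ℝ (Fin d)) :
    h.ψ t z ≤ h.A t * f z + ‖z - x0‖ ^ 2 / 2 := by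
  induction t with
  | zero => rw [h.ψ_zero, h.A_zero, pnorm_two_eq_norm]; linarith
  | succ n ih =>
    rw [h.ψ_succ, h.A_succ]
    have hcvx := hμ' (h.x (n + 1)) z
    have ha := h.a_pos n
    nlinarith [mul_le_mul_of_nonneg_left (by linarith [hcvx] :
      f (h.x (n+1)) + ⟪gradient f (h.x (n+1)), z - h.x (n+1)⟫_ℝ ≤ f z) ha.le]

set_option maxHeartbeats 1000000 in
/-- Upper invariant: `A t * f (x t) ≤ ψ t (v t)`. -/
lemma psi_ge (hp : 2 ≤ p) (hL : 0 < L)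
    (hsmooth : ∀ x y : EuclideanSpace ℝ (Fin d),
      pnorm (dualExp p) (gradient f y - gradient f x) ≤ L * pnorm p (y - x))
    (hμ' : ∀ x y : EuclideanSpace ℝ (Fin d),
      0 ≤ f y - f x - ⟪gradient f x, y - x⟫_ℝ)
    (h : HASD d p L f x0) (t : ℕ) :
    h.A t * f (h.x t) ≤ h.ψ t (h.v t) := by
  induction t with
  | zero =>
    rw [h.A_zero, h.ψ_zero, pnorm_two_eq_norm]
    have h0 : (0:ℝ) ≤ 1 / 2 * ‖h.v 0 - x0‖ ^ 2 := by positivity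
    linarith
  | succ n ih =>
    obtain ⟨g, hgdef⟩ : ∃ g, g = gradient f (h.x (n + 1)) := ⟨_, rfl⟩
    have ha := h.a_pos n
    have hA1 := A_pos h n
    have hA0 := A_nonneg h n
    have hAs := h.A_succ n
    have hsm := psi_strongmin h n (h.v (n + 1))
    have hpsi := h.ψ_succ n (h.v (n + 1))
    rw [← hgdef] at hpsi
    have hsplit : ⟪g, h.v (n+1) - h.x (n+1)⟫_ℝ =
        ⟪g, h.v n - h.x (n+1)⟫_ℝ + ⟪g, h.v (n+1) - h.v n⟫_ℝ := by
      rw [← inner_add_right]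
      congr 1
      abel
    have hsq : ‖h.v (n+1) - h.v n‖ ^ 2 / 2 + h.a (n+1) * ⟪g, h.v (n+1) - h.v n⟫_ℝ ≥
        -(h.a (n+1) ^ 2 * ‖g‖ ^ 2 / 2) := by
      have hnn : 0 ≤ ‖h.v (n+1) - h.v n + h.a (n+1) • g‖ ^ 2 := sq_nonneg _
      have hexp : ‖h.v (n+1) - h.v n + h.a (n+1) • g‖ ^ 2 =
          ‖h.v (n+1) - h.v n‖ ^ 2 + 2 * h.a (n+1) * ⟪h.v (n+1) - h.v n, g⟫_ℝ
            + h.a (n+1) ^ 2 * ‖g‖ ^ 2 := by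
        have := inner_expand (1 : ℝ) (h.a (n+1)) (h.v (n+1) - h.v n) g
        rw [one_smul] at this
        rw [this]; ring
      rw [hexp, real_inner_comm] at hnn
      linarith
    have hcvx := hμ' (h.x (n + 1)) (h.x n)
    rw [← hgdef] at hcvx
    have e1 : h.A (n+1) * (1 - h.a (n+1) / h.A (n+1)) = h.A n := by
      field_simp
      linarith [hAs]
    have e2 : h.A (n+1) * (h.a (n+1) / h.A (n+1)) = h.a (n+1) := by
      field_simp
    have hy : h.A (n+1) • (h.y n - h.x (n+1)) =
        h.A n • (h.x n - h.x (n+1)) + h.a (n+1) • (h.v n - h.x (n+1)) := by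
      rw [h.y_def n, smul_sub, smul_add, smul_smul, smul_smul, e1, e2, hAs, add_smul,
        smul_sub, smul_sub]
      abel
    have hyinner : h.A n * ⟪g, h.x n - h.x (n+1)⟫_ℝ + h.a (n+1) * ⟪g, h.v n - h.x (n+1)⟫_ℝ =
        h.A (n+1) * ⟪g, h.y n - h.x (n+1)⟫_ℝ := by
      rw [← real_inner_smul_right, ← real_inner_smul_right, ← real_inner_smul_right,
        ← inner_add_right, hy]
    have hks := keystep hp hL hsmooth h n
    rw [← hgdef] at hks
    have hgne : g ≠ 0 := hgdef ▸ h.grad_ne n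
    have hM := pnorm_pos (dualExp_pos hp) hgne
    have hG2 := pnorm_pos (by norm_num : (0:ℝ) < 2) hgne
    have hρ := h.ρ_pos n
    have hρlb := h.ρ_lb n
    rw [← hgdef] at hρlb
    have haeq := h.a_eq n
    have hG2n : pnorm 2 g = ‖g‖ := pnorm_two_eq_norm g
    have ha2 : h.a (n+1) ^ 2 * ‖g‖ ^ 2 / 2 ≤
        h.A (n+1) * pnorm (dualExp p) g ^ 2 / (18 * L) := by
      rw [← hG2n]
      have h1 : h.a (n+1) ^ 2 * h.ρ n = h.A (n+1) / (18 * L) := by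
        rw [haeq, ← hAs]
        field_simp
      have h2 : pnorm 2 g ^ 2 / (2 * pnorm (dualExp p) g ^ 2) ≤ h.ρ n := by
        calc pnorm 2 g ^ 2 / (2 * pnorm (dualExp p) g ^ 2)
            = 1/2 * (pnorm 2 g ^ 2 / pnorm (dualExp p) g ^ 2) := by ring
          _ ≤ h.ρ n := hρlb
      have h3 : h.a (n+1) ^ 2 * (pnorm 2 g ^ 2 / (2 * pnorm (dualExp p) g ^ 2)) ≤
          h.A (n+1) / (18 * L) := by
        rw [← h1]
        exact mul_le_mul_of_nonneg_left h2 (sq_nonneg _)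
      calc h.a (n+1) ^ 2 * pnorm 2 g ^ 2 / 2
          = (h.a (n+1) ^ 2 * (pnorm 2 g ^ 2 / (2 * pnorm (dualExp p) g ^ 2)))
              * pnorm (dualExp p) g ^ 2 := by
            field_simp
        _ ≤ (h.A (n+1) / (18 * L)) * pnorm (dualExp p) g ^ 2 :=
            mul_le_mul_of_nonneg_right h3 (sq_nonneg _)
        _ = h.A (n+1) * pnorm (dualExp p) g ^ 2 / (18 * L) := by ring
    have hksA : h.A (n+1) * pnorm (dualExp p) g ^ 2 / (16 * L) ≤
        h.A (n+1) * ⟪g, h.y n - h.x (n+1)⟫_ℝ := by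
      have := mul_le_mul_of_nonneg_left hks hA1.le
      calc h.A (n+1) * pnorm (dualExp p) g ^ 2 / (16 * L)
          = h.A (n+1) * (pnorm (dualExp p) g ^ 2 / (16 * L)) := by ring
        _ ≤ _ := this
    have h1618 : h.A (n+1) * pnorm (dualExp p) g ^ 2 / (18 * L) ≤
        h.A (n+1) * pnorm (dualExp p) g ^ 2 / (16 * L) :=
      div_le_div_of_nonneg_left (by positivity) (by positivity) (by linarith)
    have hcvxA : h.A n * (f (h.x (n+1)) + ⟪g, h.x n - h.x (n+1)⟫_ℝ) ≤ h.A n * f (h.x n) := by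
      apply mul_le_mul_of_nonneg_left _ hA0
      linarith
    rw [hpsi, hsplit, hAs] at *
    nlinarith [hsm, hsq, ih, hcvxA, hyinner, hksA, h1618, ha2]

set_option maxHeartbeats 1000000 in
/-- Growth of `√(A t)`. -/
lemma sqrtA_growth (hp : 2 ≤ p) (hL : 0 < L) (h : HASD d p L f x0) (t : ℕ) :
    (∑ s ∈ Finset.range t,
        pnorm (dualExp p) (gradient f (h.x (s + 1))) / pnorm 2 (gradient f (h.x (s + 1))))
      / (12 * Real.sqrt L) ≤ Real.sqrt (h.A t) := by
  induction t with
  | zero =>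
    simp [h.A_zero]
  | succ n ih =>
    obtain ⟨g, hgdef⟩ : ∃ g, g = gradient f (h.x (n + 1)) := ⟨_, rfl⟩
    have hgne : g ≠ 0 := hgdef ▸ h.grad_ne n
    have hM := pnorm_pos (dualExp_pos hp) hgne
    have hG2 := pnorm_pos (by norm_num : (0:ℝ) < 2) hgne
    set R : ℝ := pnorm (dualExp p) g / pnorm 2 g with hR
    have hR0 : 0 < R := by positivity
    have hsqL : 0 < Real.sqrt L := Real.sqrt_pos.2 hL
    have ha := h.a_pos n
    have hA1 := A_pos h n
    have hA0 := A_nonneg h n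
    have hAs := h.A_succ n
    have hρ := h.ρ_pos n
    have hρub := h.ρ_ub n
    rw [← hgdef] at hρub
    have haeq := h.a_eq n
    set σ : ℝ := Real.sqrt (h.A n) with hσ
    set σ' : ℝ := Real.sqrt (h.A (n+1)) with hσ'
    have hσ0 : 0 ≤ σ := Real.sqrt_nonneg _
    have hσ'0 : 0 < σ' := Real.sqrt_pos.2 hA1
    have hσsq : σ ^ 2 = h.A n := Real.sq_sqrt hA0
    have hσ'sq : σ' ^ 2 = h.A (n+1) := Real.sq_sqrt hA1.le
    have hσle : σ ≤ σ' := Real.sqrt_le_sqrt (by linarith)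
    -- a² ≥ A(n+1) R² / (36 L)
    have ha2 : h.A (n+1) * R ^ 2 / (36 * L) ≤ h.a (n+1) ^ 2 := by
      have h1 : h.a (n+1) ^ 2 * h.ρ n = h.A (n+1) / (18 * L) := by
        rw [haeq, ← hAs]; field_simp
      have h2 : h.ρ n ≤ 2 / R ^ 2 := by
        have : (2:ℝ) * (pnorm 2 g ^ 2 / pnorm (dualExp p) g ^ 2) = 2 / R ^ 2 := by
          rw [hR]; field_simp
        linarith [hρub, this.symm.le]
      have h3 : h.A (n+1) / (18 * L) ≤ h.a (n+1) ^ 2 * (2 / R ^ 2) := by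
        rw [← h1]
        exact mul_le_mul_of_nonneg_left h2 (sq_nonneg _)
      calc h.A (n+1) * R ^ 2 / (36 * L)
          = (h.A (n+1) / (18 * L)) * (R ^ 2 / 2) := by ring
        _ ≤ (h.a (n+1) ^ 2 * (2 / R ^ 2)) * (R ^ 2 / 2) :=
            mul_le_mul_of_nonneg_right h3 (by positivity)
        _ = h.a (n+1) ^ 2 := by field_simp
    -- a ≥ σ' R / (6 √L)
    have ha' : σ' * R / (6 * Real.sqrt L) ≤ h.a (n+1) := by
      have hb : (σ' * R / (6 * Real.sqrt L)) ^ 2 = h.A (n+1) * R ^ 2 / (36 * L) := by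
        rw [div_pow, mul_pow, mul_pow, hσ'sq, Real.sq_sqrt hL.le]
        norm_num
      have hbn : 0 ≤ σ' * R / (6 * Real.sqrt L) := by positivity
      nlinarith [ha2, ha, hb]
    -- conclude step
    have hstep : σ + R / (12 * Real.sqrt L) ≤ σ' := by
      have hfact : h.a (n+1) = (σ' - σ) * (σ' + σ) := by
        rw [show (σ' - σ) * (σ' + σ) = σ'^2 - σ^2 by ring, hσsq, hσ'sq]
        linarith
      have h2σ : (σ' - σ) * (σ' + σ) ≤ (σ' - σ) * (2 * σ') := by
        apply mul_le_mul_of_nonneg_left (by linarith) (by linarith)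
      have : σ' * R / (6 * Real.sqrt L) ≤ (σ' - σ) * (2 * σ') := by
        rw [← hfact] at h2σ
        linarith
      have hdiv : R / (12 * Real.sqrt L) ≤ σ' - σ := by
        have e1 : σ' * R / (6 * Real.sqrt L) = 2 * (σ' * (R / (12 * Real.sqrt L))) := by
          field_simp; ring
        have e2 : (σ' - σ) * (2 * σ') = 2 * (σ' * (σ' - σ)) := by ring
        have h2 : σ' * (R / (12 * Real.sqrt L)) ≤ σ' * (σ' - σ) := by linarith
        exact le_of_mul_le_mul_left h2 hσ'0
      linarith
    rw [Finset.sum_range_succ, ← hgdef, ← hR, add_div]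
    calc _ ≤ σ + R / (12 * Real.sqrt L) := by
          apply add_le_add_left
          exact ih
      _ ≤ σ' := hstep


set_option maxHeartbeats 1000000 in
theorem stmt7 {d : ℕ} (p L μ : ℝ) (hp : 2 ≤ p) (hL : 0 < L) (hμ : 0 < μ)
    (f : EuclideanSpace ℝ (Fin d) → ℝ) (hconv : ConvexOn ℝ Set.univ f)
    (hf : Differentiable ℝ f)
    (hsmooth : ∀ x y : EuclideanSpace ℝ (Fin d),
      pnorm (dualExp p) (gradient f y - gradient f x) ≤ L * pnorm p (y - x))
    (hsc : ∀ x y : EuclideanSpace ℝ (Fin d),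
      f y - f x - ⟪gradient f x, y - x⟫_ℝ ≥ (μ / 2) * pnorm 2 (y - x) ^ 2)
    (xstar : EuclideanSpace ℝ (Fin d)) (hxstar : ∀ z, f xstar ≤ f z)
    (x0 : EuclideanSpace ℝ (Fin d)) (h : HASD d p L f x0)
    (T : ℕ) (G Ghat : ℝ)
    (hG : G = (1 / (T : ℝ)) * ∑ t ∈ Finset.range T,
      pnorm (dualExp p) (gradient f (h.x (t + 1))) / pnorm 2 (gradient f (h.x (t + 1))))
    (hGhat : 1 ≤ Ghat) (hGG : Ghat ≤ G)
    (hT : (36 / Ghat) * Real.sqrt (L / μ) ≤ (T : ℝ)) :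
    f (h.x T) - f xstar ≤ (f x0 - f xstar) / 2 := by
  have hf0 : 0 ≤ f x0 - f xstar := by linarith [hxstar x0]
  -- gradient vanishes at the minimizer
  have hgrad0 : gradient f xstar = 0 := by
    have hloc : IsLocalMin f xstar := Filter.Eventually.of_forall hxstar
    unfold gradient
    rw [hloc.fderiv_eq_zero, map_zero]
  -- distance bound from strong convexity
  have hdist : ‖xstar - x0‖ ^ 2 / 2 ≤ (f x0 - f xstar) / μ := by
    have hs := hsc xstar x0
    rw [hgrad0, inner_zero_left, pnorm_two_eq_norm, norm_sub_rev] at hs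
    rw [le_div_iff₀ hμ]
    nlinarith [hs]
  -- convexity helper
  have hμ' : ∀ x y : EuclideanSpace ℝ (Fin d),
      0 ≤ f y - f x - ⟪gradient f x, y - x⟫_ℝ := by
    intro x y
    have hs := hsc x y
    have h2 : 0 ≤ (μ / 2) * pnorm 2 (y - x) ^ 2 :=
      mul_nonneg (by linarith) (pow_nonneg (pnorm_nonneg _ _) 2)
    linarith
  have hGhat0 : 0 < Ghat := by linarith
  have hLμ : 0 < Real.sqrt (L / μ) := Real.sqrt_pos.2 (by positivity)
  have hT0 : 0 < (T : ℝ) := by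
    have : 0 < 36 / Ghat * Real.sqrt (L / μ) :=
      mul_pos (div_pos (by norm_num) hGhat0) hLμ
    linarith
  have hTne : (T : ℝ) ≠ 0 := hT0.ne'
  have hsum : (∑ t ∈ Finset.range T,
      pnorm (dualExp p) (gradient f (h.x (t + 1))) / pnorm 2 (gradient f (h.x (t + 1))))
      = (T : ℝ) * G := by
    rw [hG]
    field_simp
  have hgrow := sqrtA_growth hp hL h T
  rw [hsum] at hgrow
  have hsqL : 0 < Real.sqrt L := Real.sqrt_pos.2 hL
  have hTG : 36 * Real.sqrt (L / μ) ≤ (T : ℝ) * G := by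
    have h1 : 36 * Real.sqrt (L / μ) ≤ Ghat * (T : ℝ) := by
      have h2 := mul_le_mul_of_nonneg_left hT hGhat0.le
      calc 36 * Real.sqrt (L / μ) = Ghat * (36 / Ghat * Real.sqrt (L / μ)) := by
            field_simp
        _ ≤ Ghat * (T : ℝ) := h2
    calc 36 * Real.sqrt (L / μ) ≤ Ghat * (T : ℝ) := h1
      _ ≤ G * (T : ℝ) := mul_le_mul_of_nonneg_right hGG hT0.le
      _ = (T : ℝ) * G := mul_comm _ _
  have hTG0 : 0 ≤ (T : ℝ) * G := le_trans (by positivity) hTG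
  have hAT : 9 / μ ≤ h.A T := by
    have hA0 : 0 ≤ h.A T := A_nonneg h T
    have h2 : h.A T = Real.sqrt (h.A T) ^ 2 := (Real.sq_sqrt hA0).symm
    have h3 : (36 : ℝ) ^ 2 * (L / μ) ≤ ((T : ℝ) * G) ^ 2 := by
      have h4 := Real.sq_sqrt (le_of_lt (show (0:ℝ) < L / μ by positivity))
      nlinarith [hTG, hLμ]
    have h5 : (((T : ℝ) * G) / (12 * Real.sqrt L)) ^ 2 = ((T : ℝ) * G) ^ 2 / (144 * L) := by
      rw [div_pow, mul_pow, mul_pow, Real.sq_sqrt hL.le]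
      norm_num
    have h6 : 0 ≤ ((T : ℝ) * G) / (12 * Real.sqrt L) := by positivity
    have h7 : ((T : ℝ) * G) ^ 2 / (144 * L) ≤ h.A T := by
      rw [h2, ← h5]
      exact pow_le_pow_left₀ h6 hgrow 2
    have h3' : 1296 * L ≤ ((T : ℝ) * G) ^ 2 * μ := by
      have hmm := mul_le_mul_of_nonneg_right h3 hμ.le
      have hLd : L / μ * μ = L := div_mul_cancel₀ L hμ.ne'
      nlinarith [hmm, hLd]
    have h8 : 9 / μ ≤ ((T : ℝ) * G) ^ 2 / (144 * L) := by
      rw [div_le_div_iff₀ hμ (by positivity)]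
      linarith
    linarith
  have hub := psi_ge hp hL hsmooth hμ' h T
  have hlb := psi_le hμ' h T xstar
  have hvx := h.v_min T xstar
  have hkey : h.A T * (f (h.x T) - f xstar) ≤ ‖xstar - x0‖ ^ 2 / 2 := by
    have hr : h.A T * (f (h.x T) - f xstar) = h.A T * f (h.x T) - h.A T * f xstar := by ring
    linarith
  rcases le_or_gt (f (h.x T) - f xstar) 0 with hneg | hpos
  · linarith
  · have h9 : (9 / μ) * (f (h.x T) - f xstar) ≤ h.A T * (f (h.x T) - f xstar) :=
      mul_le_mul_of_nonneg_right hAT hpos.le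
    have h10 : h.A T * (f (h.x T) - f xstar) ≤ (f x0 - f xstar) / μ := le_trans hkey hdist
    have h11 : 9 * (f (h.x T) - f xstar) ≤ f x0 - f xstar := by
      have h12 := le_trans h9 h10
      have h13 : μ * ((9 / μ) * (f (h.x T) - f xstar)) = 9 * (f (h.x T) - f xstar) := by
        field_simp
      have h14 : μ * ((f x0 - f xstar) / μ) = f x0 - f xstar := by field_simp
      nlinarith [mul_le_mul_of_nonneg_left h12 hμ.le]
    linarith
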